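/- For every integer r ≥ 0 there exists a finite solvable group G of odd order with derived length exactly 2r + 1 and Ω(|G|) = (4·7^r − 1)/3, where Ω(|G|) is the number of prime factors of |G| counted with multiplicity. (Such a group is A₃ wr H_m, where H_m is the r-fold iterated wreath product of the group H₇ ≤ S₇ of order 21 and A₃ is cyclic of order 3.) -/

import Mathlib

/-- `Omega n` is the number of prime factors of `n` counted with multiplicity,
usually denoted `Ω(n)`.  For a finite solvable group `G`, `Omega (Nat.card G)`
is the composition length of `G`. -/
def Omega (n : ℕ) : ℕ := n.primeFactorsList.length

/-- `DerivedLengthEq G d` says that the derived (solvable) length of `G` is exactly `d`: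
the `d`-th term of the derived series is trivial and no earlier term is trivial. -/
def DerivedLengthEq (G : Type*) [Group G] (d : ℕ) : Prop :=
  derivedSeries G d = ⊥ ∧ ∀ k < d, derivedSeries G k ≠ ⊥


def tw : ZMod 3 → ZMod 7 := fun s => if s = 0 then 1 else if s = 1 then 2 else 4

lemma tw_add : ∀ s t : ZMod 3, tw (s + t) = tw s * tw t := by decide

lemma tw_zero : tw 0 = 1 := rfl

@[ext]
structure H7 where
  a : ZMod 7
  s : ZMod 3
deriving DecidableEq, Fintype

namespace H7

instance : Mul H7 := ⟨fun x y => ⟨x.a + tw x.s * y.a, x.s + y.s⟩⟩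
instance : One H7 := ⟨⟨0, 0⟩⟩
instance : Inv H7 := ⟨fun x => ⟨-(tw (-x.s) * x.a), -x.s⟩⟩

lemma mul_def (x y : H7) : x * y = ⟨x.a + tw x.s * y.a, x.s + y.s⟩ := rfl
lemma one_def : (1 : H7) = ⟨0, 0⟩ := rfl
lemma inv_def (x : H7) : x⁻¹ = ⟨-(tw (-x.s) * x.a), -x.s⟩ := rfl

instance : Group H7 :=
  Group.ofLeftAxioms
    (fun x y z => by
      ext
      · show x.a + tw x.s * y.a + tw (x.s + y.s) * z.a
            = x.a + tw x.s * (y.a + tw y.s * z.a)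
        rw [tw_add]; ring
      · exact add_assoc _ _ _)
    (fun x => by ext <;> simp [mul_def, one_def, tw_zero])
    (fun x => by
      ext
      · show -(tw (-x.s) * x.a) + tw (-x.s) * x.a = 0
        ring
      · exact neg_add_cancel _)

instance : SMul H7 (ZMod 7) := ⟨fun h x => tw h.s * x + h.a⟩

lemma smul_def (h : H7) (x : ZMod 7) : h • x = tw h.s * x + h.a := rfl

instance : MulAction H7 (ZMod 7) where
  one_smul x := by simp [smul_def, one_def, tw_zero]
  mul_smul x y p := by
    simp only [smul_def, mul_def, tw_add]; ring

end H7

open SemidirectProduct Subgroup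
open scoped commutatorElement

variable (K : Type) [Group K]

/-- The automorphism action of `H7` on `ZMod 7 → K` permuting coordinates. -/
def wrAut : H7 →* MulAut (ZMod 7 → K) where
  toFun h :=
    { toFun := fun f x => f (h⁻¹ • x)
      invFun := fun f x => f (h • x)
      left_inv := fun f => funext fun x => by show f (h⁻¹ • (h • x)) = f x; rw [inv_smul_smul]
      right_inv := fun f => funext fun x => by show f (h • (h⁻¹ • x)) = f x; rw [smul_inv_smul]
      map_mul' := fun f g => rfl }
  map_one' := by ext f x; simp
  map_mul' h g := by ext f x; simp [mul_smul]

lemma wrAut_apply (h : H7) (f : ZMod 7 → K) (x : ZMod 7) :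
    wrAut K h f x = f (h⁻¹ • x) := rfl

/-- The wreath product `K wr H7`. -/
abbrev Wr : Type := (ZMod 7 → K) ⋊[wrAut K] H7

/-- Semidirect products are in bijection with pairs. -/
def sdEquiv {N G : Type*} [Group N] [Group G] (φ : G →* MulAut N) :
    (N ⋊[φ] G) ≃ N × G :=
  ⟨fun x => (x.left, x.right), fun p => ⟨p.1, p.2⟩, fun _ => rfl, fun _ => rfl⟩

instance sdFinite {N G : Type*} [Group N] [Group G] (φ : G →* MulAut N)
    [Finite N] [Finite G] : Finite (N ⋊[φ] G) :=
  Finite.of_equiv _ (sdEquiv φ).symm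

lemma card_H7 : Nat.card H7 = 21 := by
  rw [Nat.card_eq_fintype_card]; decide

lemma card_Wr [Finite K] : Nat.card (Wr K) = Nat.card K ^ 7 * 21 := by
  rw [Nat.card_congr (sdEquiv (wrAut K)), Nat.card_prod, card_H7, Nat.card_pi]
  simp [Finset.prod_const]

/-- Projection of `H7` onto its top `C₃`. -/
def chi : H7 →* Multiplicative (ZMod 3) where
  toFun h := Multiplicative.ofAdd h.s
  map_one' := rfl
  map_mul' _ _ := rfl

lemma derivedSeries_mult_zmod3 : derivedSeries (Multiplicative (ZMod 3)) 1 = ⊥ := by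
  rw [eq_bot_iff, derivedSeries_succ, derivedSeries_zero, commutator_le]
  intro x _ y _
  rw [Subgroup.mem_bot, commutatorElement_def, mul_comm x y]
  group

lemma derivedSeries_H7_one_le : derivedSeries H7 1 ≤ chi.ker := by
  rw [← Subgroup.map_eq_bot_iff, eq_bot_iff]
  exact le_trans (map_derivedSeries_le_derivedSeries chi 1)
    (le_of_eq derivedSeries_mult_zmod3)

lemma derivedSeries_H7_two : derivedSeries H7 2 = ⊥ := by
  rw [eq_bot_iff, derivedSeries_succ, commutator_le]
  intro x hx y hy
  have hxs : x.s = 0 := derivedSeries_H7_one_le hx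
  have hys : y.s = 0 := derivedSeries_H7_one_le hy
  rw [Subgroup.mem_bot, commutatorElement_eq_one_iff_mul_comm]
  ext
  · show x.a + tw x.s * y.a = y.a + tw y.s * x.a
    rw [hxs, hys, tw_zero]; ring
  · show x.s + y.s = y.s + x.s
    ring

lemma derivedSeries_antitone' (G : Type*) [Group G] {m n : ℕ} (h : m ≤ n) :
    derivedSeries G n ≤ derivedSeries G m := by
  induction n with
  | zero => simp_all
  | succ n ih =>
    rcases Nat.lt_or_ge m (n + 1) with h' | h'
    · refine le_trans ?_ (ih (by omega))
      rw [derivedSeries_succ]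
      haveI := derivedSeries_normal G n
      exact Subgroup.commutator_le_left _ _
    · have : m = n + 1 := le_antisymm h h'
      subst this; exact le_rfl

lemma derivedSeries_Wr_two_le :
    derivedSeries (Wr K) 2 ≤ (inl : (ZMod 7 → K) →* Wr K).range := by
  rw [range_inl_eq_ker_rightHom, ← Subgroup.map_eq_bot_iff, eq_bot_iff]
  exact le_trans (map_derivedSeries_le_derivedSeries rightHom 2)
    (le_of_eq derivedSeries_H7_two)

lemma derivedSeries_Wr_upper (k : ℕ) :
    derivedSeries (Wr K) (2 + k) ≤
      Subgroup.map inl (Subgroup.pi Set.univ fun _ => derivedSeries K k) := by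
  induction k with
  | zero =>
    rw [Nat.add_zero]
    refine le_trans (derivedSeries_Wr_two_le K) ?_
    simp only [derivedSeries_zero, Subgroup.pi_top]
    rw [MonoidHom.range_eq_map]
  | succ k ih =>
    have h2 : 2 + (k + 1) = (2 + k) + 1 := by omega
    rw [h2, derivedSeries_succ]
    refine le_trans (commutator_mono ih ih) ?_
    rw [← Subgroup.map_commutator]
    refine Subgroup.map_mono ?_
    rw [commutator_le]
    intro f hf g hg
    rw [Subgroup.mem_pi] at hf hg ⊢
    intro i _
    rw [derivedSeries_succ]
    exact commutator_mem_commutator (hf i trivial) (hg i trivial)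

lemma derivedSeries_Wr_bot {d : ℕ} (hK : derivedSeries K d = ⊥) :
    derivedSeries (Wr K) (d + 2) = ⊥ := by
  have hpi : (Subgroup.pi Set.univ fun _ : ZMod 7 => (⊥ : Subgroup K)) = ⊥ := by
    rw [eq_bot_iff]
    intro f hf
    rw [Subgroup.mem_pi] at hf
    rw [Subgroup.mem_bot]
    funext i
    exact hf i trivial
  have h := derivedSeries_Wr_upper K d
  rw [hK, hpi, Subgroup.map_bot] at h
  rw [eq_bot_iff, Nat.add_comm]
  exact h

lemma comm_inl_inr (n : ZMod 7 → K) (g : H7) :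
    ⁅(inl n : Wr K), (inr g : Wr K)⁆ = inl (n * wrAut K g n⁻¹) := by
  have h : inr g * inl n⁻¹ * inr g⁻¹ = (inl (wrAut K g n⁻¹) : Wr K) :=
    (inl_aut g n⁻¹).symm
  rw [commutatorElement_def, ← map_inv, ← map_inv]
  calc inl n * inr g * inl n⁻¹ * inr g⁻¹
      = inl n * (inr g * inl n⁻¹ * inr g⁻¹) := by group
    _ = inl n * inl (wrAut K g n⁻¹) := by rw [h]
    _ = inl (n * wrAut K g n⁻¹) := by rw [map_mul]

/-- The function supported at `0` with value `a`. -/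
def d0 (a : K) : ZMod 7 → K := fun x => if x = 0 then a else 1

/-- The image in `K` of the coordinate-`0` projection of the part of
`derivedSeries (Wr K) (k+2)` lying in the base subgroup. -/
def T (k : ℕ) : Subgroup K :=
  Subgroup.map (Pi.evalMonoidHom (fun _ : ZMod 7 => K) 0)
    ((derivedSeries (Wr K) (k + 2)).comap (inl : (ZMod 7 → K) →* Wr K))

lemma derivedSeries_Wr_lower (k : ℕ) : derivedSeries K k ≤ T K k := by
  induction k with
  | zero =>
    intro a _
    set h3 : H7 := ⟨3, 0⟩ with hh3
    set s1 : H7 := ⟨1, 0⟩ with hs1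
    set F : ZMod 7 → K := d0 K a * wrAut K h3 (d0 K a)⁻¹ with hF
    have hf1 : (⁅(inl (d0 K a) : Wr K), (inr h3 : Wr K)⁆) ∈ derivedSeries (Wr K) 1 := by
      rw [derivedSeries_succ]
      exact commutator_mem_commutator (mem_top _) (mem_top _)
    have hs : (inr s1 : Wr K) ∈ derivedSeries (Wr K) 1 := by
      have e : s1 = ⁅(⟨0, 1⟩ : H7), (⟨1, 0⟩ : H7)⁆ := by decide
      rw [derivedSeries_succ, e, map_commutatorElement]
      exact commutator_mem_commutator (mem_top _) (mem_top _)
    have hg : (⁅(⁅(inl (d0 K a) : Wr K), (inr h3 : Wr K)⁆), (inr s1 : Wr K)⁆) ∈ derivedSeries (Wr K) 2 := by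
      rw [derivedSeries_succ]
      exact commutator_mem_commutator hf1 hs
    rw [comm_inl_inr, comm_inl_inr] at hg
    refine Subgroup.mem_map.2 ⟨F * wrAut K s1 F⁻¹, Subgroup.mem_comap.2 hg, ?_⟩
    show (F * wrAut K s1 F⁻¹) 0 = a
    rw [Pi.mul_apply, wrAut_apply, Pi.inv_apply]
    have e1 : s1⁻¹ • (0 : ZMod 7) = 6 := by decide
    have e2 : h3⁻¹ • (0 : ZMod 7) = 4 := by decide
    have e3 : h3⁻¹ • (6 : ZMod 7) = 3 := by decide
    have hd0 : ∀ x : ZMod 7, x ≠ 0 → d0 K a x = 1 := fun x hx => if_neg hx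
    have hd00 : d0 K a 0 = a := if_pos rfl
    have hF0 : F 0 = a := by
      rw [hF, Pi.mul_apply, wrAut_apply, Pi.inv_apply, e2, hd00, hd0 4 (by decide)]
      simp
    have hF6 : F 6 = 1 := by
      rw [hF, Pi.mul_apply, wrAut_apply, Pi.inv_apply, e3, hd0 6 (by decide), hd0 3 (by decide)]
      simp
    rw [e1, hF0, hF6]
    simp
  | succ k ih =>
    rw [derivedSeries_succ]
    refine le_trans (commutator_mono ih ih) ?_
    rw [commutator_le]
    intro x hx y hy
    obtain ⟨F, hF, rfl⟩ := Subgroup.mem_map.1 hx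
    obtain ⟨G, hG, rfl⟩ := Subgroup.mem_map.1 hy
    refine Subgroup.mem_map.2 ⟨⁅F, G⁆, ?_, ?_⟩
    · rw [Subgroup.mem_comap] at hF hG ⊢
      rw [map_commutatorElement]
      show _ ∈ derivedSeries (Wr K) ((k + 2) + 1)
      rw [derivedSeries_succ]
      exact commutator_mem_commutator hF hG
    · rw [map_commutatorElement]

theorem step {d : ℕ} (hd : 1 ≤ d) (h : DerivedLengthEq K d) :
    DerivedLengthEq (Wr K) (d + 2) := by
  refine ⟨derivedSeries_Wr_bot K h.1, ?_⟩
  intro k hk hbot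
  have hKne := h.2 (d - 1) (by omega)
  rw [Ne, Subgroup.eq_bot_iff_forall] at hKne
  push_neg at hKne
  obtain ⟨a, ha, ha1⟩ := hKne
  obtain ⟨F, hF, hF0⟩ := Subgroup.mem_map.1 (derivedSeries_Wr_lower K (d - 1) ha)
  rw [Subgroup.mem_comap] at hF
  have hd2 : d - 1 + 2 = d + 1 := by omega
  rw [hd2] at hF
  have hle : derivedSeries (Wr K) (d + 1) ≤ derivedSeries (Wr K) k :=
    derivedSeries_antitone' _ (by omega)
  rw [hbot] at hle
  have h1 : (inl F : Wr K) = 1 := Subgroup.mem_bot.1 (hle hF)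
  have h2 : F = 1 := inl_injective (by rw [h1, map_one])
  exact ha1 (by rw [← hF0, h2, map_one])

lemma Omega_mul {m n : ℕ} (hm : m ≠ 0) (hn : n ≠ 0) :
    Omega (m * n) = Omega m + Omega n := by
  unfold Omega
  rw [(Nat.perm_primeFactorsList_mul hm hn).length_eq, List.length_append]

lemma Omega_pow_prime {p : ℕ} (hp : p.Prime) (a : ℕ) : Omega (p ^ a) = a := by
  induction a with
  | zero => rw [pow_zero]; unfold Omega; rw [Nat.primeFactorsList_one]; rfl
  | succ a ih =>
    rw [pow_succ, Omega_mul (pow_ne_zero _ hp.pos.ne') hp.pos.ne', ih]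
    unfold Omega
    rw [Nat.primeFactorsList_prime hp]
    rfl

theorem tower (r : ℕ) : ∃ (G : Type) (_ : Group G) (_ : Finite G) (a b : ℕ),
    Nat.card G = 3 ^ a * 7 ^ b ∧ 3 * (a + b) + 1 = 4 * 7 ^ r ∧
      DerivedLengthEq G (2 * r + 1) := by
  induction r with
  | zero =>
    refine ⟨Multiplicative (ZMod 3), inferInstance, inferInstance, 1, 0, ?_, by norm_num, ?_, ?_⟩
    · rw [Nat.card_congr Multiplicative.toAdd, Nat.card_zmod]; norm_num
    · exact derivedSeries_mult_zmod3
    · intro k hk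
      have hk0 : k = 0 := by omega
      subst hk0
      rw [derivedSeries_zero]
      exact top_ne_bot
  | succ r ih =>
    obtain ⟨G, _, _, a, b, hc, hab, hdl⟩ := ih
    refine ⟨Wr G, inferInstance, inferInstance, 7 * a + 1, 7 * b + 1, ?_, ?_, ?_⟩
    · rw [card_Wr, hc]; ring
    · rw [pow_succ]; linarith [hab]
    · have hs := step G (by omega : 1 ≤ 2 * r + 1) hdl
      have h2 : 2 * (r + 1) + 1 = (2 * r + 1) + 2 := by ring
      rw [h2]
      exact hs


/-- For every `r ≥ 0` there is a finite solvable group of odd order with derived length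
exactly `2r + 1` and composition length `(4·7^r − 1)/3` (e.g. `A₃ wr H_m`, where `H_m`
is the `r`-fold iterated wreath product of the subgroup `H₇ ≤ S₇` of order `21` and `A₃`
is cyclic of order `3`). -/
theorem exists_odd_solvable_derived_length_two_mul_add_one (r : ℕ) :
    ∃ (G : Type) (_ : Group G) (_ : Finite G), IsSolvable G ∧ Odd (Nat.card G) ∧
      DerivedLengthEq G (2 * r + 1) ∧ Omega (Nat.card G) = (4 * 7 ^ r - 1) / 3 := by
  obtain ⟨G, _, _, a, b, hc, hab, hdl⟩ := tower r
  refine ⟨G, inferInstance, inferInstance, ⟨⟨2 * r + 1, hdl.1⟩⟩, ?_, hdl, ?_⟩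
  · rw [hc]
    exact Odd.mul (Odd.pow (by decide)) (Odd.pow (by decide))
  · rw [hc, Omega_mul (pow_ne_zero _ (by norm_num)) (pow_ne_zero _ (by norm_num)),
      Omega_pow_prime (by norm_num) _, Omega_pow_prime (by norm_num) _]
    omega
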